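/- The collection of Borel subsets of Σ^ω is strictly contained in the collection of analytic subsets of Σ^ω, when Σ has at least two letters: there exists an analytic set that is not Borel. -/

import Mathlib

open Set MeasureTheory Filter Topology

namespace Stmt9

/-- Baire space. -/
abbrev N := ℕ → ℕ

instance : PolishSpace (N × N) := inferInstance
instance : PolishSpace ((N × N) × N) := {}

noncomputable def e : List (ℕ × ℕ) ≃ ℕ := Denumerable.eqv _

/-- A function on Baire space depending only on the first `k` coordinates is continuous. -/
lemma continuous_of_dep {β : Type*} [TopologicalSpace β] (k : ℕ) (f : N → β)
    (hf : ∀ x y : N, (∀ i, i < k → x i = y i) → f x = f y) : Continuous f := by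
  have : f = (fun v : Fin k → ℕ => f (fun i => if h : i < k then v ⟨i, h⟩ else 0)) ∘
      (fun x (i : Fin k) => x i) := by
    funext x
    exact hf x _ (fun i hi => by simp [hi])
  rw [this]
  exact continuous_of_discreteTopology.comp (continuous_pi fun i => continuous_apply _)

/-- Evaluation is continuous (with `ℕ` discrete). -/
lemma continuous_eval : Continuous fun p : N × ℕ => p.1 p.2 := by
  rw [continuous_iff_continuousAt]
  rintro ⟨c, k⟩
  have h : ((fun d : N => d k) ⁻¹' {c k}) ×ˢ ({k} : Set ℕ) ∈ 𝓝 (c, k) :=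
    prod_mem_nhds
      (((isOpen_discrete _).preimage (continuous_apply k)).mem_nhds rfl)
      ((isOpen_discrete _).mem_nhds rfl)
  have ht : Tendsto (fun p : N × ℕ => p.1 p.2) (𝓝 (c, k)) (pure (c k)) := by
    rw [tendsto_pure]
    filter_upwards [h] with p hp
    obtain ⟨h1, h2⟩ := hp
    simp only [mem_preimage, mem_singleton_iff] at h1 h2
    rw [h2, h1]
  exact ht.mono_right (pure_le_nhds _)

def seg (x z : N) (n : ℕ) : List (ℕ × ℕ) := List.ofFn fun i : Fin n => (x i, z i)

noncomputable def code (x z : N) (n : ℕ) : ℕ := e (seg x z n)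

/-- The universal closed set. -/
def D : Set ((N × N) × N) := {p | ∀ n, p.1.1 (code p.1.2 p.2 n) = 1}

/-- The universal analytic set. -/
def U : Set (N × N) := Prod.fst '' D

lemma continuous_code (n : ℕ) : Continuous fun q : N × N => code q.1 q.2 n := by
  have : (fun q : N × N => code q.1 q.2 n) =
      (fun v : (Fin n → ℕ) × (Fin n → ℕ) => e (List.ofFn fun i => (v.1 i, v.2 i))) ∘
        (fun q => (fun i : Fin n => q.1 i, fun i : Fin n => q.2 i)) := rfl
  rw [this]
  exact continuous_of_discreteTopology.comp
    ((continuous_pi fun i => (continuous_apply _).comp continuous_fst).prodMk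
      (continuous_pi fun i => (continuous_apply _).comp continuous_snd))

lemma isClosed_D : IsClosed D := by
  have : D = ⋂ n, (fun p : (N × N) × N => p.1.1 (code p.1.2 p.2 n)) ⁻¹' {1} := by
    ext p; simp [D]
  rw [this]
  refine isClosed_iInter fun n => IsClosed.preimage ?_ (isClosed_discrete _)
  exact continuous_eval.comp
    ((continuous_fst.comp continuous_fst).prodMk
      ((continuous_code n).comp ((continuous_snd.comp continuous_fst).prodMk continuous_snd)))

lemma analytic_U : AnalyticSet U :=
  isClosed_D.analyticSet.image_of_continuous continuous_fst

lemma mem_U {c x : N} : (c, x) ∈ U ↔ ∃ z, ∀ n, c (code x z n) = 1 := by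
  constructor
  · rintro ⟨⟨⟨c', x'⟩, z⟩, hp, heq⟩
    injection heq with h1 h2
    subst h1; subst h2
    exact ⟨z, hp⟩
  · rintro ⟨z, hz⟩
    exact ⟨((c, x), z), hz, rfl⟩

/-- Universality: every analytic subset of Baire space is a section of `U`. -/
lemma exists_code {B : Set N} (hB : AnalyticSet B) :
    ∃ c : N, ∀ x, ((c, x) ∈ U ↔ x ∈ B) := by
  classical
  rw [AnalyticSet] at hB
  rcases hB with rfl | ⟨f, hf, rfl⟩
  · refine ⟨fun _ => 0, fun x => ?_⟩
    simp only [mem_U, mem_empty_iff_false, iff_false]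
    rintro ⟨z, hz⟩
    exact absurd (hz 0) (by norm_num)
  · set Ok : List (ℕ × ℕ) → Prop := fun s => ∃ y : N, seg (f y) y s.length = s with hOkdef
    refine ⟨fun m => if Ok (e.symm m) then 1 else 0, fun x => ?_⟩
    have cOne : ∀ s : List (ℕ × ℕ),
        (if Ok (e.symm (e s)) then (1 : ℕ) else 0) = 1 ↔ Ok s := by
      intro s
      rw [e.symm_apply_apply]
      split_ifs with h <;> simp [h]
    rw [mem_U]
    constructor
    · rintro ⟨z, hz⟩
      have hOk : ∀ n, ∃ y : N, seg (f y) y n = seg x z n := by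
        intro n
        have := (cOne (seg x z n)).1 (hz n)
        rw [hOkdef] at this
        obtain ⟨y, hy⟩ := this
        refine ⟨y, ?_⟩
        simpa [seg, List.length_ofFn] using hy
      choose y hy using hOk
      have hyz : ∀ k n, k < n → y n k = z k ∧ f (y n) k = x k := by
        intro k n hk
        have h1 : (fun i : Fin n => (f (y n) i, (y n) i)) = fun i : Fin n => (x i, z i) :=
          List.ofFn_injective (hy n)
        have h2 := congrFun h1 ⟨k, hk⟩
        simp only [Prod.mk.injEq] at h2
        exact ⟨h2.2, h2.1⟩
      have tends : Tendsto (fun n => y n) atTop (𝓝 z) := by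
        rw [tendsto_pi_nhds]
        intro k
        refine Tendsto.congr' ?_ tendsto_const_nhds
        filter_upwards [eventually_gt_atTop k] with n hn using ((hyz k n hn).1).symm
      refine ⟨z, funext fun k => ?_⟩
      have tf : Tendsto (fun n => f (y n) k) atTop (𝓝 (f z k)) :=
        ((continuous_apply k).tendsto _).comp ((hf.tendsto z).comp tends)
      have ev1' : ∀ᶠ n in atTop, f (y n) k ∈ ({f z k} : Set ℕ) :=
        tf ((isOpen_discrete _).mem_nhds (mem_singleton _))
      have ev1 : ∀ᶠ n in atTop, f (y n) k = f z k := by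
        filter_upwards [ev1'] with n hn using hn
      have ev2 : ∀ᶠ n in atTop, f (y n) k = x k := by
        filter_upwards [eventually_gt_atTop k] with n hn using (hyz k n hn).2
      obtain ⟨n, h1, h2⟩ := (ev1.and ev2).exists
      rw [← h1, h2]
    · rintro ⟨y, rfl⟩
      refine ⟨y, fun n => ?_⟩
      rw [code, cOne, hOkdef]
      exact ⟨y, by simp [seg, List.length_ofFn]⟩

/-- The diagonal analytic set. -/
def A : Set N := (fun x => (x, x)) ⁻¹' U

lemma analytic_A : AnalyticSet A :=
  analytic_U.preimage (continuous_id.prodMk continuous_id)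

lemma not_analytic_compl_A : ¬ AnalyticSet Aᶜ := by
  intro h
  obtain ⟨c, hc⟩ := exists_code h
  have h1 := hc c
  simp only [A, mem_compl_iff, mem_preimage] at h1
  tauto

/-! ### Embedding Baire space into `Γ^ω` -/

def pos (y : N) (n : ℕ) : ℕ := n + ∑ i ∈ Finset.range n, y i

lemma strictMono_pos (y : N) : StrictMono (pos y) :=
  strictMono_nat_of_lt_succ fun n => by
    simp only [pos, Finset.sum_range_succ]; omega

lemma le_pos (y : N) (n : ℕ) : n ≤ pos y n := Nat.le_add_right _ _

variable {Γ : Type} [TopologicalSpace Γ] [DiscreteTopology Γ]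

open Classical in
noncomputable def g (a b : Γ) (y : N) : ℕ → Γ :=
  fun k => if ∃ n, pos y n = k then b else a

lemma g_eq_b_iff {a b : Γ} (hab : a ≠ b) {y : N} {k : ℕ} :
    g a b y k = b ↔ ∃ n, pos y n = k := by
  unfold g
  split_ifs with h <;> simp [h, hab]

lemma g_inj {a b : Γ} (hab : a ≠ b) : Function.Injective (g a b) := by
  intro y y' h
  have hr : range (pos y) = range (pos y') := by
    ext k
    simp only [mem_range]
    rw [← g_eq_b_iff hab, ← g_eq_b_iff hab, h]
  have hp : pos y = pos y' := ((strictMono_pos y).range_inj (strictMono_pos y')).1 hr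
  funext n
  have h1 := congrFun hp n
  have h2 := congrFun hp (n + 1)
  simp only [pos, Finset.sum_range_succ] at h1 h2
  omega

lemma g_cont (a b : Γ) : Continuous (g a b) := by
  classical
  apply continuous_pi
  intro k
  apply continuous_of_dep (k + 1)
  intro x y hxy
  have hpos : ∀ n, n ≤ k → pos x n = pos y n := by
    intro n hn
    unfold pos
    congr 1
    refine Finset.sum_congr rfl fun i hi => ?_
    exact hxy i (by have := Finset.mem_range.1 hi; omega)
  have hiff : (∃ n, pos x n = k) ↔ (∃ n, pos y n = k) := by
    constructor
    · rintro ⟨n, rfl⟩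
      exact ⟨n, (hpos n (le_pos x n)).symm⟩
    · rintro ⟨n, hn⟩
      exact ⟨n, by rw [hpos n (hn ▸ le_pos y n)]; exact hn⟩
  unfold g
  exact if_congr hiff rfl rfl

end Stmt9

/-- When `Γ` has at least two letters, the Borel subsets of `Γ^ω` are strictly
contained in the analytic subsets: there is an analytic set that is not Borel. -/
theorem stmt_9 (Γ : Type) [Fintype Γ] [TopologicalSpace Γ] [DiscreteTopology Γ]
    (hcard : 2 ≤ Fintype.card Γ)
    [MeasurableSpace (ℕ → Γ)] [BorelSpace (ℕ → Γ)] :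
    ∃ A : Set (ℕ → Γ), MeasureTheory.AnalyticSet A ∧ ¬ MeasurableSet A := by
  obtain ⟨a, b, hab⟩ := Fintype.one_lt_card_iff.1 hcard
  refine ⟨Stmt9.g a b '' Stmt9.A,
    Stmt9.analytic_A.image_of_continuous (Stmt9.g_cont a b), ?_⟩
  intro hmeas
  haveI : PolishSpace Γ := inferInstance
  have h2 : MeasureTheory.AnalyticSet ((Stmt9.g a b '' Stmt9.A)ᶜ) :=
    hmeas.compl.analyticSet
  have h3 : MeasureTheory.AnalyticSet (Stmt9.g a b ⁻¹' ((Stmt9.g a b '' Stmt9.A)ᶜ)) :=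
    h2.preimage (Stmt9.g_cont a b)
  have h4 : Stmt9.g a b ⁻¹' ((Stmt9.g a b '' Stmt9.A)ᶜ) = Stmt9.Aᶜ := by
    rw [Set.preimage_compl, Function.Injective.preimage_image (Stmt9.g_inj hab)]
  exact Stmt9.not_analytic_compl_A (h4 ▸ h3)
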